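/- Let R be a commutative QF ring (noetherian and injective as a module over itself) and A a commutative noetherian R-algebra such that every maximal ideal of A is R-cofinite (A/𝔪 is finitely generated as an R-module for every maximal ideal 𝔪). Then ⋂{I : I ideal of A with A/I finitely generated as an R-module} = 0; equivalently, A° = {f ∈ A^* : f(I) = 0 for some R-cofinite ideal I} is dense in A^* with respect to the finite topology. -/

import Mathlib

open Submodule

section QF
variable {R : Type*} [CommRing R] [IsNoetherianRing R] [Module.Injective R R]

/-- In a noetherian self-injective commutative ring, every proper ideal has a
nonzero annihilator. -/
lemma exists_ann (J : Ideal R) (hJ : J ≠ ⊤) : ∃ a : R, a ≠ 0 ∧ ∀ x ∈ J, x * a = 0 := by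
  by_cases h : J.annihilator = ⊥
  · exfalso
    obtain ⟨s, hs⟩ := Submodule.fg_def.mp (IsNoetherian.noetherian J)
    obtain ⟨sf⟩ := hs.1.fintype
    -- the map r ↦ (x * r)_{x ∈ s}
    haveI : Fintype s := hs.1.fintype
    let φ : R →ₗ[R] (s → R) := LinearMap.pi (fun i : s => (i : R) • LinearMap.id)
    have hφ : Function.Injective φ := by
      rw [← LinearMap.ker_eq_bot, eq_bot_iff]
      intro r hr
      simp only [LinearMap.mem_ker, φ] at hr
      have : r ∈ (Submodule.span R s).annihilator := by
        rw [Submodule.mem_annihilator_span]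
        intro n
        have := congrFun hr n
        simpa [mul_comm, smul_eq_mul] using this
      rw [hs.2] at this
      rw [h] at this
      simpa using this
    obtain ⟨g, hg⟩ := Module.Injective.extension_property R R _ _ φ hφ (LinearMap.id)
    classical
    have h1 : g (φ 1) = 1 := by
      have := congrArg (fun (m : R →ₗ[R] R) => m 1) hg
      simpa using this
    have h2 : g (φ 1) ∈ J := by
      rw [LinearMap.pi_apply_eq_sum_univ]
      apply Ideal.sum_mem
      intro i _
      have hi : (i : R) ∈ J := by rw [← hs.2]; exact Submodule.subset_span i.2
      simp only [φ, LinearMap.pi_apply, LinearMap.smul_apply, LinearMap.id_apply, smul_eq_mul,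
        mul_one]
      exact J.mul_mem_right _ hi
    rw [h1] at h2
    exact hJ (Ideal.eq_top_iff_one J |>.mpr h2)
  · obtain ⟨a, haJ, ha0⟩ := Submodule.exists_mem_ne_zero_of_ne_bot h
    exact ⟨a, ha0, fun x hx => by
      have := Submodule.mem_annihilator.mp haJ x hx
      rwa [smul_eq_mul, mul_comm] at this⟩

end QF

section QF2
variable {R : Type*} [CommRing R] [IsNoetherianRing R] [Module.Injective R R]

lemma double_annihilator (I : Ideal R) : I.annihilator.annihilator = I := by
  refine le_antisymm ?_ ?_
  · intro x hx
    by_contra hxI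
    -- the conductor ideal J = (I : x)
    set J : Ideal R := Submodule.comap (LinearMap.toSpanSingleton R R x) I with hJdef
    have hmemJ : ∀ r : R, r ∈ J ↔ r • x ∈ I := fun r => Iff.rfl
    have hJ : J ≠ ⊤ := by
      intro hT
      apply hxI
      have : (1 : R) ∈ J := hT ▸ Submodule.mem_top
      simpa using (hmemJ 1).mp this
    obtain ⟨a, ha0, haJ⟩ := exists_ann J hJ
    -- ι : R/J → R/I, r ↦ r x,  injective
    let ι : (R ⧸ J) →ₗ[R] (R ⧸ I) := Submodule.mapQ J I (LinearMap.toSpanSingleton R R x) le_rfl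
    have hι : Function.Injective ι := by
      rw [← LinearMap.ker_eq_bot, eq_bot_iff]
      intro y hy
      obtain ⟨r, rfl⟩ := Submodule.Quotient.mk_surjective J y
      rw [LinearMap.mem_ker, Submodule.mapQ_apply, Submodule.Quotient.mk_eq_zero] at hy
      rw [Submodule.mem_bot, Submodule.Quotient.mk_eq_zero]
      exact (hmemJ r).mpr hy
    -- g : R/J → R, r ↦ r a
    let g : (R ⧸ J) →ₗ[R] R := Submodule.liftQ J (LinearMap.toSpanSingleton R R a)
      (fun r hr => by
        simpa [LinearMap.mem_ker, LinearMap.toSpanSingleton_apply, smul_eq_mul]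
          using haJ r hr)
    obtain ⟨h, hh⟩ := Module.Injective.extension_property R R _ _ ι hι g
    let φ : R →ₗ[R] R := h ∘ₗ I.mkQ
    have hφI : ∀ y ∈ I, φ y = 0 := by
      intro y hy
      simp only [φ, LinearMap.comp_apply, Submodule.mkQ_apply]
      rw [show (Submodule.Quotient.mk y : R ⧸ I) = 0 from (Submodule.Quotient.mk_eq_zero I).mpr hy]
      simp
    have hφlin : ∀ y : R, φ y = y * φ 1 := fun y => by
      have : φ (y • (1 : R)) = y • φ 1 := map_smul φ y 1
      simpa [smul_eq_mul] using this
    have hc : φ 1 ∈ I.annihilator := by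
      rw [Submodule.mem_annihilator]
      intro n hn
      rw [smul_eq_mul, mul_comm, ← hφlin]
      exact hφI n hn
    have hφx : φ x = a := by
      have h1 : (I.mkQ x : R ⧸ I) = ι (Submodule.Quotient.mk 1) := by
        rw [show ι (Submodule.Quotient.mk 1)
            = Submodule.Quotient.mk ((LinearMap.toSpanSingleton R R x) 1) from
          Submodule.mapQ_apply _ _ _ _]
        simp
      have := congrArg (fun m => m (Submodule.Quotient.mk (1:R))) hh
      simp only [LinearMap.comp_apply] at this
      calc φ x = h (I.mkQ x) := rfl
        _ = h (ι (Submodule.Quotient.mk 1)) := by rw [h1]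
        _ = g (Submodule.Quotient.mk 1) := this
        _ = a := by
          rw [show g (Submodule.Quotient.mk 1)
              = (LinearMap.toSpanSingleton R R a) 1 from Submodule.liftQ_apply _ _ _]
          simp
    have : x • (φ 1) = 0 := Submodule.mem_annihilator.mp hx _ hc
    rw [smul_eq_mul, ← hφlin, hφx] at this
    exact ha0 this
  · intro x hx
    rw [Submodule.mem_annihilator]
    intro n hn
    have := Submodule.mem_annihilator.mp hn x hx
    rwa [smul_eq_mul, mul_comm, ← smul_eq_mul] at this

lemma isArtinianRing_of_selfInjective : IsArtinianRing R := by
  have hart : IsArtinian R R := by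
    rw [isArtinian_iff]
    have hwf : WellFounded ((· > ·) : Ideal R → Ideal R → Prop) :=
      (isNoetherian_iff (R := R) (M := R)).mp inferInstance
    refine Subrelation.wf (r := InvImage (· > ·) (fun I : Ideal R => I.annihilator)) ?_
      (InvImage.wf _ hwf)
    intro I J hIJ
    have hle : J.annihilator ≤ I.annihilator := fun r hr => by
      rw [Submodule.mem_annihilator] at hr ⊢
      exact fun n hn => hr n (le_of_lt hIJ hn)
    have hne : J.annihilator ≠ I.annihilator := by
      intro he
      have h2 := congrArg Submodule.annihilator he
      rw [double_annihilator, double_annihilator] at h2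
      exact hIJ.ne' h2
    exact lt_of_le_of_ne hle hne
  exact hart

end QF2

section Fin

variable {R A M : Type*} [CommRing R] [CommRing A] [Algebra R A]
  [AddCommGroup M] [Module R M] [Module A M] [IsScalarTower R A M]

/-- If `M` is a finite `A`-module killed by an `R`-cofinite ideal `I` of `A`, then `M`
is a finite `R`-module. -/
lemma Module.Finite.of_torsion (I : Ideal A) [Module.Finite R (A ⧸ I)] [Module.Finite A M]
    (htor : ∀ x ∈ I, ∀ m : M, x • m = 0) : Module.Finite R M := by
  classical
  obtain ⟨s, hs⟩ := Module.Finite.fg_top (R := A) (M := M)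
  obtain ⟨tq, htq⟩ := Module.Finite.fg_top (R := R) (M := A ⧸ I)
  let lift : (A ⧸ I) → A := fun y => (Ideal.Quotient.mk_surjective y).choose
  have hlift : ∀ y : A ⧸ I, Ideal.Quotient.mk I (lift y) = y :=
    fun y => (Ideal.Quotient.mk_surjective y).choose_spec
  let t : Finset A := tq.image lift
  have key1 : ∀ b : A, ∃ c ∈ Submodule.span R (↑t : Set A), b - c ∈ I := by
    intro b
    have hmkb : (Ideal.Quotient.mk I b : A ⧸ I) ∈ Submodule.span R (↑tq : Set (A ⧸ I)) := by
      rw [htq]; trivial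
    have hsub : Submodule.span R (↑tq : Set (A ⧸ I)) ≤
        Submodule.map ((Ideal.Quotient.mkₐ R I).toLinearMap) (Submodule.span R (↑t : Set A)) := by
      rw [Submodule.span_le]
      intro y hy
      refine ⟨lift y, Submodule.subset_span ?_, by simpa using hlift y⟩
      exact Finset.mem_image_of_mem lift hy
    obtain ⟨c, hc, hcb⟩ := hsub hmkb
    refine ⟨c, hc, ?_⟩
    have hce : Ideal.Quotient.mk I c = Ideal.Quotient.mk I b := hcb
    have := Ideal.Quotient.eq.mp hce
    simpa [neg_sub] using I.neg_mem this
  let X : Finset M := ((insert (1:A) t) ×ˢ s).image (fun p => p.1 • p.2)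
  have hspanmul : ∀ m : M, m ∈ (↑s : Set M) → ∀ c : A, c ∈ Submodule.span R (↑t : Set A) →
      c • m ∈ Submodule.span R (↑X : Set M) := by
    intro m hm c hc
    induction hc using Submodule.span_induction with
    | mem y hy =>
        apply Submodule.subset_span
        simp only [X, Finset.coe_image, Set.mem_image]
        exact ⟨(y, m), by simp [Finset.mem_product, hy, hm], rfl⟩
    | zero => simpa using Submodule.zero_mem _
    | add y z _ _ hy hz => rw [add_smul]; exact Submodule.add_mem _ hy hz
    | smul r y _ hy => rw [smul_assoc]; exact Submodule.smul_mem _ r hy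
  have key2 : ∀ (b : A) (m : M), m ∈ (↑s : Set M) → b • m ∈ Submodule.span R (↑X : Set M) := by
    intro b m hm
    obtain ⟨c, hc, hbc⟩ := key1 b
    have hbm : b • m = c • m := by
      have h0 : (b - c) • m = 0 := htor _ hbc m
      rw [sub_smul, sub_eq_zero] at h0
      exact h0
    rw [hbm]
    exact hspanmul m hm c hc
  have main : ∀ m : M, m ∈ Submodule.span R (↑X : Set M) := by
    intro m
    have hmem : m ∈ Submodule.span A (↑s : Set M) := by rw [hs]; trivial
    induction hmem using Submodule.span_induction with
    | mem y hy => simpa using key2 1 y hy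
    | zero => exact Submodule.zero_mem _
    | add y z _ _ hy hz => exact Submodule.add_mem _ hy hz
    | smul a y hy' hy =>
        clear hy'
        induction hy using Submodule.span_induction with
        | mem z hz =>
            simp only [X, Finset.coe_image, Set.mem_image] at hz
            obtain ⟨⟨b, w⟩, hpm, rfl⟩ := hz
            simp only [Finset.mem_coe, Finset.mem_product] at hpm
            rw [smul_smul]
            exact key2 _ _ hpm.2
        | zero => simpa using Submodule.zero_mem _
        | add y' z' _ _ hy' hz' => rw [smul_add]; exact Submodule.add_mem _ hy' hz'
        | smul r y' _ hy' => rw [smul_comm]; exact Submodule.smul_mem _ r hy'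
  exact ⟨⟨X, le_antisymm le_top (fun m _ => main m)⟩⟩

end Fin

section Pow
variable {R A : Type*} [CommRing R] [CommRing A] [Algebra R A] [IsNoetherianRing A]

lemma finite_quotient_pow (𝔪 : Ideal A) (hm : Module.Finite R (A ⧸ 𝔪)) :
    ∀ n : ℕ, Module.Finite R (A ⧸ 𝔪 ^ n)
  | 0 => by
      haveI : Subsingleton (A ⧸ 𝔪 ^ 0) := by
        rw [pow_zero, Ideal.one_eq_top]
        exact Submodule.Quotient.subsingleton_iff.mpr rfl
      infer_instance
  | (n+1) => by
      haveI := finite_quotient_pow 𝔪 hm n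
      haveI := hm
      let S : Submodule A (A ⧸ 𝔪 ^ (n+1)) := Submodule.map (𝔪 ^ (n+1)).mkQ (𝔪 ^ n)
      haveI hSA : Module.Finite A S :=
        Module.Finite.iff_fg.mpr ((IsNoetherian.noetherian (𝔪 ^ n)).map _)
      have htor : ∀ x ∈ 𝔪, ∀ m : S, x • m = (0 : S) := by
        rintro x hx ⟨m, hm'⟩
        obtain ⟨y, hy, rfl⟩ := Submodule.mem_map.mp hm'
        apply Subtype.ext
        show x • ((𝔪 ^ (n+1)).mkQ y) = 0
        rw [← map_smul, Submodule.mkQ_apply, Submodule.Quotient.mk_eq_zero]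
        have hxy : x • y = y * x := by rw [smul_eq_mul, mul_comm]
        rw [hxy, pow_succ]
        exact Ideal.mul_mem_mul hy hx
      haveI hSR : Module.Finite R S := Module.Finite.of_torsion 𝔪 htor
      have hle : 𝔪 ^ (n + 1) ≤ 𝔪 ^ n := Ideal.pow_le_pow_right (Nat.le_succ n)
      let e := Submodule.quotientQuotientEquivQuotient (𝔪 ^ (n+1)) (𝔪 ^ n) hle
      haveI hQS : Module.Finite R ((A ⧸ 𝔪 ^ (n+1)) ⧸ S) :=
        Module.Finite.equiv (e.restrictScalars R).symm
      -- now assemble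
      have h1 : ((⊤ : Submodule R (A ⧸ 𝔪 ^ (n+1))).map (S.restrictScalars R).mkQ).FG := by
        rw [Submodule.map_top, Submodule.range_mkQ]
        exact Module.finite_def.mp
          (Module.Finite.equiv (Submodule.Quotient.restrictScalarsEquiv R S).symm)
      have h2 : ((⊤ : Submodule R (A ⧸ 𝔪 ^ (n+1))) ⊓
          LinearMap.ker (S.restrictScalars R).mkQ).FG := by
        rw [Submodule.ker_mkQ, top_inf_eq]
        exact Module.Finite.iff_fg.mp
          (Module.Finite.equiv
            (((Submodule.restrictScalarsEquiv R A _ S).restrictScalars R).symm))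
      exact Module.finite_def.mpr
        (Submodule.fg_of_fg_map_of_fg_inf_ker (S.restrictScalars R).mkQ h1 h2)

end Pow

section Main
variable {R A : Type*} [CommRing R] [IsNoetherianRing R] [Module.Injective R R]
  [CommRing A] [Algebra R A] [IsNoetherianRing A]

lemma part1 (hmax : ∀ 𝔪 : Ideal A, 𝔪.IsMaximal → Module.Finite R (A ⧸ 𝔪))
    (a : A) (ha : ∀ I : Ideal A, Module.Finite R (A ⧸ I) → a ∈ I) : a = 0 := by
  by_contra h0
  let J : Ideal A := Submodule.comap (LinearMap.toSpanSingleton A A a) ⊥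
  have hJ : J ≠ ⊤ := by
    intro hT
    apply h0
    have h1 : (1 : A) ∈ J := hT ▸ Submodule.mem_top
    rw [Submodule.mem_comap] at h1
    simpa using h1
  obtain ⟨𝔪, h𝔪max, hJ𝔪⟩ := Ideal.exists_le_maximal J hJ
  have hfin := finite_quotient_pow (R := R) 𝔪 (hmax 𝔪 h𝔪max)
  have hmem : a ∈ (⨅ i : ℕ, 𝔪 ^ i • (⊤ : Submodule A A)) := by
    rw [Submodule.mem_iInf]
    intro i
    rw [smul_eq_mul, ← Ideal.one_eq_top, mul_one]
    exact ha _ (hfin i)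
  obtain ⟨r, hr⟩ := (Ideal.mem_iInf_smul_pow_eq_bot_iff 𝔪 a).mp hmem
  have h1r : (1 - (r : A)) ∈ J := by
    rw [Submodule.mem_comap]
    simp only [LinearMap.toSpanSingleton_apply, Submodule.mem_bot]
    rw [sub_smul, one_smul, hr, sub_self]
  have hone : (1 : A) ∈ 𝔪 := by
    have := 𝔪.add_mem (hJ𝔪 h1r) r.2
    simpa using this
  exact h𝔪max.ne_top (Ideal.eq_top_iff_one 𝔪 |>.mpr hone)

lemma cofinite_inf (I K : Ideal A) (hI : Module.Finite R (A ⧸ I))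
    (hK : Module.Finite R (A ⧸ K)) : Module.Finite R (A ⧸ (I ⊓ K)) := by
  haveI := hI; haveI := hK
  let χ : A →ₗ[R] (A ⧸ I) × (A ⧸ K) :=
    LinearMap.prod (Ideal.Quotient.mkₐ R I).toLinearMap (Ideal.Quotient.mkₐ R K).toLinearMap
  have hker : LinearMap.ker χ = (I ⊓ K).restrictScalars R := by
    ext x
    simp [χ, LinearMap.mem_ker, Prod.ext_iff, Ideal.Quotient.eq_zero_iff_mem]
  haveI : IsNoetherian R ((A ⧸ I) × (A ⧸ K)) := isNoetherian_of_isNoetherianRing_of_finite R _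
  haveI : Module.Finite R (LinearMap.range χ) :=
    Module.Finite.iff_fg.mpr (IsNoetherian.noetherian _)
  have e : (A ⧸ LinearMap.ker χ) ≃ₗ[R] LinearMap.range χ := χ.quotKerEquivRange
  rw [hker] at e
  haveI : Module.Finite R (A ⧸ (I ⊓ K).restrictScalars R) := Module.Finite.equiv e.symm
  exact Module.Finite.equiv (Submodule.Quotient.restrictScalarsEquiv R (I ⊓ K))

lemma density_core (hmax : ∀ 𝔪 : Ideal A, 𝔪.IsMaximal → Module.Finite R (A ⧸ 𝔪))
    (f : Module.Dual R A) (s : Finset A) :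
    ∃ g : Module.Dual R A, (∃ I : Ideal A, Module.Finite R (A ⧸ I) ∧ ∀ x ∈ I, g x = 0) ∧
      ∀ x ∈ s, g x = f x := by
  haveI : IsArtinianRing R := isArtinianRing_of_selfInjective
  set M : Submodule R A := Submodule.span R (↑s : Set A) with hM
  haveI : Module.Finite R M := Module.Finite.span_of_finite R s.finite_toSet
  haveI : IsArtinian R M := isArtinian_of_fg_of_artinian' 
  set 𝒮 : Set (Submodule R M) :=
    {N | ∃ I : Ideal A, Module.Finite R (A ⧸ I) ∧
      N = Submodule.comap M.subtype (I.restrictScalars R)} with h𝒮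
  have htopfin : Module.Finite R (A ⧸ (⊤ : Ideal A)) := by
    haveI : Subsingleton (A ⧸ (⊤ : Ideal A)) :=
      Submodule.Quotient.subsingleton_iff.mpr rfl
    infer_instance
  have hne : 𝒮.Nonempty := ⟨_, ⊤, htopfin, rfl⟩
  obtain ⟨N₀, hN₀mem, hmin⟩ := IsArtinian.set_has_minimal 𝒮 hne
  obtain ⟨I₀, hI₀fin, hN₀⟩ := hN₀mem
  have key : ∀ x : A, x ∈ I₀ → x ∈ M → x = 0 := by
    intro x hxI₀ hxM
    apply part1 hmax x
    intro I hIfin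
    have hinf : Module.Finite R (A ⧸ (I ⊓ I₀)) := cofinite_inf I I₀ hIfin hI₀fin
    set N' : Submodule R M := Submodule.comap M.subtype ((I ⊓ I₀).restrictScalars R) with hN'
    have hN'mem : N' ∈ 𝒮 := ⟨I ⊓ I₀, hinf, rfl⟩
    have hle : N' ≤ N₀ := by
      rw [hN₀, hN']
      exact Submodule.comap_mono (fun y hy => hy.2)
    have heq : N' = N₀ := by
      by_contra hneq
      exact hmin N' hN'mem (lt_of_le_of_ne hle hneq)
    have hx0 : (⟨x, hxM⟩ : M) ∈ N₀ := by
      rw [hN₀]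
      exact hxI₀
    rw [← heq] at hx0
    exact hx0.1
  let p : M →ₗ[R] (A ⧸ I₀) := (Ideal.Quotient.mkₐ R I₀).toLinearMap ∘ₗ M.subtype
  have hp : Function.Injective p := by
    rw [← LinearMap.ker_eq_bot, eq_bot_iff]
    intro m hm
    rw [LinearMap.mem_ker] at hm
    have hmI : (m : A) ∈ I₀ := by
      have : Ideal.Quotient.mk I₀ (m : A) = 0 := hm
      exact Ideal.Quotient.eq_zero_iff_mem.mp this
    have : (m : A) = 0 := key _ hmI m.2
    simpa using Subtype.ext this
  haveI := hI₀fin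
  obtain ⟨h, hh⟩ := Module.Injective.extension_property R R M (A ⧸ I₀) p hp (f ∘ₗ M.subtype)
  refine ⟨h ∘ₗ (Ideal.Quotient.mkₐ R I₀).toLinearMap, ⟨I₀, hI₀fin, ?_⟩, ?_⟩
  · intro x hx
    have hx0 : Ideal.Quotient.mk I₀ x = 0 := Ideal.Quotient.eq_zero_iff_mem.mpr hx
    simp only [LinearMap.comp_apply, AlgHom.toLinearMap_apply, Ideal.Quotient.mkₐ_eq_mk]
    rw [hx0, map_zero]
  · intro x hxs
    have hxM : x ∈ M := Submodule.subset_span hxs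
    have := congrArg (fun (m : M →ₗ[R] R) => m ⟨x, hxM⟩) hh
    simpa [p] using this

end Main

/-- `A° = {f ∈ A^* : f(I) = 0` for some `R`-cofinite ideal `I` of `A}` (for a
commutative algebra `A`). -/
def finiteDualComm (R : Type*) (A : Type*) [CommRing R] [CommRing A] [Algebra R A] :
    Set (Module.Dual R A) :=
  {f | ∃ I : Ideal A, Module.Finite R (A ⧸ I) ∧ ∀ x ∈ I, f x = 0}

/-- The finite topology on `A^* = Hom_R(A,R)`: the topology induced from the product
topology on `R^A`, where `R` carries the discrete topology. -/
def finiteTopology (R A : Type*) [CommRing R] [AddCommGroup A] [Module R A] :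
    TopologicalSpace (Module.Dual R A) :=
  TopologicalSpace.induced (fun f : Module.Dual R A => (f : A → R))
    (@Pi.topologicalSpace A (fun _ => R) (fun _ => ⊥))

theorem finiteDual_dense_of_maximal_ideals_cofinite
    {R A : Type*} [CommRing R] [Nontrivial R]
    -- `R` is a QF ring
    [IsNoetherianRing R] [Module.Injective R R]
    -- `A` is a commutative noetherian `R`-algebra
    [CommRing A] [Algebra R A] [IsNoetherianRing A]
    -- every maximal ideal of `A` is `R`-cofinite
    (hmax : ∀ 𝔪 : Ideal A, 𝔪.IsMaximal → Module.Finite R (A ⧸ 𝔪)) :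
    -- then the intersection of all `R`-cofinite ideals of `A` is zero, ...
    (∀ a : A, (∀ I : Ideal A, Module.Finite R (A ⧸ I) → a ∈ I) → a = 0) ∧
    -- ... equivalently, `A°` is dense in `A^*` for the finite topology
    @Dense (Module.Dual R A) (finiteTopology R A) (finiteDualComm R A) := by
  refine ⟨part1 hmax, ?_⟩
  letI tR : TopologicalSpace R := ⊥
  letI tP : TopologicalSpace (A → R) := Pi.topologicalSpace
  refine (@dense_iff_inter_open (Module.Dual R A) (finiteTopology R A) (finiteDualComm R A)).mpr ?_
  rintro U hU ⟨f, hfU⟩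
  obtain ⟨V, hV, rfl⟩ := isOpen_induced_iff.mp hU
  have hfV : (f : A → R) ∈ V := hfU
  obtain ⟨s, u, hsu, hsub⟩ := isOpen_pi_iff.mp hV _ hfV
  obtain ⟨g, hgdual, hgf⟩ := density_core hmax f s
  refine ⟨g, ?_, hgdual⟩
  show (fun f : Module.Dual R A => (f : A → R)) g ∈ V
  apply hsub
  intro a ha
  show g a ∈ u a
  rw [hgf a (Finset.mem_coe.mp ha)]
  exact (hsu a (Finset.mem_coe.mp ha)).2
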